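/- arXiv:1010.3665 — 4 statements merged into one kernel-verified Lean document; each statement's English description precedes it below -/
import Mathlib

section
/- Let n ≥ 1 and 1 ≤ q ≤ n. Let B be an n×n Hermitian complex matrix with the property that for every q-element subset S of the index set, the sum over S of the eigenvalues of B (counted with multiplicity) is nonnegative. Let u : (Fin q → Fin n) → ℂ be alternating, i.e. u(v ∘ π) = sign(π)·u(v) for every permutation π of Fin q, and u(v) = 0 whenever v is not injective. Then the quantity Σ_{K : Fin (q−1) → Fin n} Σ_{j,k ∈ Fin n} B_{j,k} · u(Fin.cons j K) · conj(u(Fin.cons k K)) is a real number and is nonnegative (its imaginary part vanishes and its real part is ≥ 0). -/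
open scoped ComplexConjugate

set_option maxHeartbeats 1000000

private lemma alt_vanish {N q : ℕ} (u : (Fin q → Fin N) → ℂ)
    (halt : ∀ (v : Fin q → Fin N) (π : Equiv.Perm (Fin q)),
      u (v ∘ π) = ((Equiv.Perm.sign π : ℤ) : ℂ) * u v)
    (v : Fin q → Fin N) (hv : ¬ Function.Injective v) : u v = 0 := by
  rw [Function.not_injective_iff] at hv
  obtain ⟨a, b, hab, hne⟩ := hv
  have hv' : v ∘ (Equiv.swap a b) = v := by
    funext x
    rcases eq_or_ne x a with rfl | hxa
    · simp [Equiv.swap_apply_left, hab]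
    rcases eq_or_ne x b with rfl | hxb
    · simp [Equiv.swap_apply_right, hab]
    · simp [Equiv.swap_apply_of_ne_of_ne hxa hxb]
  have h := halt v (Equiv.swap a b)
  rw [hv', Equiv.Perm.sign_swap hne] at h
  have h2 : u v = - u v := by simpa using h
  linear_combination h2 / 2

open Finset in
private lemma levi_key {n p : ℕ} (B : Matrix (Fin n) (Fin n) ℂ) (hB : B.IsHermitian)
    (hsum : ∀ S : Finset (Fin n), S.card = p + 1 → 0 ≤ ∑ i ∈ S, hB.eigenvalues i)
    (u : (Fin (p + 1) → Fin n) → ℂ)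
    (halt : ∀ (v : Fin (p + 1) → Fin n) (π : Equiv.Perm (Fin (p + 1))),
      u (v ∘ π) = ((Equiv.Perm.sign π : ℤ) : ℂ) * u v) :
    ∃ r : ℝ, (∑ K : Fin p → Fin n, ∑ j : Fin n, ∑ k : Fin n,
        B j k * u (Fin.cons j K) * conj (u (Fin.cons k K))) = (r : ℂ) ∧ 0 ≤ r := by
  classical
  set U : Matrix (Fin n) (Fin n) ℂ := (hB.eigenvectorUnitary : Matrix (Fin n) (Fin n) ℂ)
    with hUdef
  set lam : Fin n → ℝ := hB.eigenvalues with hlam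
  have hUU : U * star U = 1 := (Matrix.mem_unitaryGroup_iff).mp hB.eigenvectorUnitary.2
  have hunit : ∀ a b : Fin n, (∑ m, U a m * conj (U b m)) = if a = b then 1 else 0 := by
    intro a b
    have h := congrFun (congrFun hUU a) b
    simpa [Matrix.mul_apply, Matrix.star_apply, Matrix.one_apply] using h
  have hBent : ∀ j k, B j k = ∑ m, U j m * (lam m : ℂ) * conj (U k m) := by
    intro j k
    have h0 := congrFun (congrFun hB.spectral_theorem j) k
    rw [Unitary.conjStarAlgAut_apply, Matrix.mul_apply] at h0
    rw [h0]
    refine Finset.sum_congr rfl fun m _ => ?_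
    rw [Matrix.mul_diagonal, Matrix.star_apply]
    rfl
  set tu : (Fin (p + 1) → Fin n) → ℂ :=
    fun v => ∑ w : Fin (p + 1) → Fin n, (∏ i, U (w i) (v i)) * u w with htu
  have htalt : ∀ (v : Fin (p + 1) → Fin n) (π : Equiv.Perm (Fin (p + 1))),
      tu (v ∘ π) = ((Equiv.Perm.sign π : ℤ) : ℂ) * tu v := by
    intro v π
    calc tu (v ∘ π) = ∑ w : Fin (p + 1) → Fin n, (∏ i, U (w i) (v (π i))) * u w := rfl
      _ = ∑ x : Fin (p + 1) → Fin n, (∏ i, U (x (π i)) (v (π i))) * u (x ∘ π) := by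
          have hEapp : ∀ x : Fin (p + 1) → Fin n,
              (Equiv.arrowCongr π.symm (Equiv.refl (Fin n))) x = x ∘ π := by
            intro x; funext i; simp [Equiv.arrowCongr]
          refine (Fintype.sum_equiv (Equiv.arrowCongr π.symm (Equiv.refl (Fin n)))
            (fun x => (∏ i, U (x (π i)) (v (π i))) * u (x ∘ π))
            (fun w => (∏ i, U (w i) (v (π i))) * u w) (fun x => ?_)).symm
          rw [hEapp x]
          rfl
      _ = ∑ x : Fin (p + 1) → Fin n,
            ((Equiv.Perm.sign π : ℤ) : ℂ) * ((∏ i, U (x i) (v i)) * u x) := by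
          refine Finset.sum_congr rfl fun x _ => ?_
          rw [halt x π, Equiv.prod_comp π (fun i => U (x i) (v i))]
          ring
      _ = ((Equiv.Perm.sign π : ℤ) : ℂ) * tu v := by rw [← Finset.mul_sum]
  set P : (Fin p → Fin n) → (Fin p → Fin n) → ℂ := fun L K => ∏ i, U (L i) (K i) with hP
  set c : Fin n → (Fin p → Fin n) → ℂ := fun m L => ∑ j, U j m * u (Fin.cons j L) with hc
  have hPdelta : ∀ L M : Fin p → Fin n,
      (∑ K : Fin p → Fin n, P L K * conj (P M K)) = if L = M then 1 else 0 := by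
    intro L M
    calc (∑ K : Fin p → Fin n, P L K * conj (P M K))
        = ∑ K : Fin p → Fin n, ∏ i, (U (L i) (K i) * conj (U (M i) (K i))) := by
          refine Finset.sum_congr rfl fun K _ => ?_
          rw [hP]; rw [map_prod]; exact (Finset.prod_mul_distrib).symm
      _ = ∏ i, ∑ κ : Fin n, U (L i) κ * conj (U (M i) κ) := by
          rw [Finset.prod_univ_sum (fun _ => (univ : Finset (Fin n)))
            (fun i κ => U (L i) κ * conj (U (M i) κ)), Fintype.piFinset_univ]
      _ = ∏ i, ((if L i = M i then 1 else 0) : ℂ) :=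
          Finset.prod_congr rfl fun i _ => hunit (L i) (M i)
      _ = if L = M then 1 else 0 := by
          by_cases h : L = M
          · simp [h]
          · obtain ⟨i, hi⟩ : ∃ i, L i ≠ M i := by
              simpa [funext_iff] using h
            rw [if_neg h]
            exact Finset.prod_eq_zero (mem_univ i) (by simp [hi])
  have hcons : ∀ (m : Fin n) (K : Fin p → Fin n),
      tu (Fin.cons m K) = ∑ L, P L K * c m L := by
    intro m K
    calc tu (Fin.cons m K)
        = ∑ w : Fin (p + 1) → Fin n, (∏ i, U (w i) ((Fin.cons m K : Fin (p + 1) → Fin n) i)) * u w := rfl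
      _ = ∑ jL : Fin n × (Fin p → Fin n),
            (∏ i, U ((Fin.cons jL.1 jL.2 : Fin (p + 1) → Fin n) i) ((Fin.cons m K : Fin (p + 1) → Fin n) i)) * u (Fin.cons jL.1 jL.2) := by
          refine (Fintype.sum_equiv (Fin.consEquiv (fun _ => Fin n))
            (fun jL => (∏ i, U ((Fin.cons jL.1 jL.2 : Fin (p + 1) → Fin n) i) ((Fin.cons m K : Fin (p + 1) → Fin n) i)) * u (Fin.cons jL.1 jL.2))
            (fun w => (∏ i, U (w i) ((Fin.cons m K : Fin (p + 1) → Fin n) i)) * u w) (fun jL => rfl)).symm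
      _ = ∑ j : Fin n, ∑ L : Fin p → Fin n,
            (U j m * ∏ i : Fin p, U (L i) (K i)) * u (Fin.cons j L) := by
          rw [Fintype.sum_prod_type]
          refine Finset.sum_congr rfl fun j _ => Finset.sum_congr rfl fun L _ => ?_
          congr 1
          rw [Fin.prod_univ_succ]
          simp
      _ = ∑ L, P L K * c m L := by
          rw [Finset.sum_comm]
          refine Finset.sum_congr rfl fun L _ => ?_
          rw [hc, hP]
          simp only [Finset.mul_sum]
          exact Finset.sum_congr rfl fun j _ => by ring
  have hL : ∀ L : Fin p → Fin n, ∑ m, (lam m : ℂ) * (c m L * conj (c m L))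
      = ∑ j, ∑ k, B j k * u (Fin.cons j L) * conj (u (Fin.cons k L)) := by
    intro L
    calc ∑ m, (lam m : ℂ) * (c m L * conj (c m L))
        = ∑ m, ∑ j, ∑ k, (lam m : ℂ) * U j m * conj (U k m)
            * (u (Fin.cons j L) * conj (u (Fin.cons k L))) := by
          refine Finset.sum_congr rfl fun m _ => ?_
          rw [hc]
          rw [map_sum, Finset.sum_mul_sum]
          simp only [Finset.mul_sum, map_mul]
          exact Finset.sum_congr rfl fun j _ => Finset.sum_congr rfl fun k _ => by ring
      _ = ∑ j, ∑ k, (∑ m, U j m * (lam m : ℂ) * conj (U k m))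
            * (u (Fin.cons j L) * conj (u (Fin.cons k L))) := by
          rw [Finset.sum_comm]
          refine Finset.sum_congr rfl fun j _ => ?_
          rw [Finset.sum_comm]
          refine Finset.sum_congr rfl fun k _ => ?_
          rw [Finset.sum_mul]
          exact Finset.sum_congr rfl fun m _ => by ring
      _ = ∑ j, ∑ k, B j k * u (Fin.cons j L) * conj (u (Fin.cons k L)) := by
          refine Finset.sum_congr rfl fun j _ => Finset.sum_congr rfl fun k _ => ?_
          rw [← hBent j k]; ring
  have hQ : (∑ m, (lam m : ℂ) * ∑ K : Fin p → Fin n, tu (Fin.cons m K) * conj (tu (Fin.cons m K)))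
      = ∑ K : Fin p → Fin n, ∑ j : Fin n, ∑ k : Fin n,
        B j k * u (Fin.cons j K) * conj (u (Fin.cons k K)) := by
    calc ∑ m, (lam m : ℂ) * ∑ K : Fin p → Fin n, tu (Fin.cons m K) * conj (tu (Fin.cons m K))
        = ∑ m, (lam m : ℂ) * ∑ K : Fin p → Fin n, ∑ L, ∑ M,
            (c m L * conj (c m M)) * (P L K * conj (P M K)) := by
          refine Finset.sum_congr rfl fun m _ => ?_
          congr 1
          refine Finset.sum_congr rfl fun K _ => ?_
          rw [hcons m K, map_sum, Finset.sum_mul_sum]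
          simp only [map_mul]
          exact Finset.sum_congr rfl fun L _ => Finset.sum_congr rfl fun M _ => by ring
      _ = ∑ m, (lam m : ℂ) * ∑ L, ∑ M,
            (c m L * conj (c m M)) * ∑ K : Fin p → Fin n, (P L K * conj (P M K)) := by
          refine Finset.sum_congr rfl fun m _ => ?_
          congr 1
          rw [Finset.sum_comm]
          refine Finset.sum_congr rfl fun L _ => ?_
          rw [Finset.sum_comm]
          refine Finset.sum_congr rfl fun M _ => ?_
          rw [Finset.mul_sum]
      _ = ∑ m, (lam m : ℂ) * ∑ L, c m L * conj (c m L) := by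
          refine Finset.sum_congr rfl fun m _ => ?_
          congr 1
          refine Finset.sum_congr rfl fun L _ => ?_
          rw [Finset.sum_eq_single L]
          · rw [hPdelta, if_pos rfl, mul_one]
          · intro M _ hM
            rw [hPdelta, if_neg (Ne.symm hM), mul_zero]
          · intro h; exact absurd (mem_univ L) h
      _ = ∑ L, ∑ m, (lam m : ℂ) * (c m L * conj (c m L)) := by
          simp only [Finset.mul_sum]
          exact Finset.sum_comm
      _ = ∑ K : Fin p → Fin n, ∑ j : Fin n, ∑ k : Fin n,
            B j k * u (Fin.cons j K) * conj (u (Fin.cons k K)) :=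
          Finset.sum_congr rfl fun L _ => hL L
  refine ⟨∑ m, lam m * ∑ K : Fin p → Fin n, Complex.normSq (tu (Fin.cons m K)), ?_, ?_⟩
  · rw [← hQ]
    simp only [Complex.mul_conj]
    push_cast
    rfl
  · -- nonnegativity
    have hrw : (∑ m, lam m * ∑ K : Fin p → Fin n, Complex.normSq (tu (Fin.cons m K)))
        = ∑ v : Fin (p + 1) → Fin n, lam (v 0) * Complex.normSq (tu v) := by
      calc ∑ m, lam m * ∑ K : Fin p → Fin n, Complex.normSq (tu (Fin.cons m K))
          = ∑ jK : Fin n × (Fin p → Fin n),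
              lam ((Fin.cons jK.1 jK.2 : Fin (p + 1) → Fin n) 0) * Complex.normSq (tu (Fin.cons jK.1 jK.2)) := by
            rw [Fintype.sum_prod_type]
            refine Finset.sum_congr rfl fun m _ => ?_
            rw [Finset.mul_sum]
            exact Finset.sum_congr rfl fun K _ => by rw [Fin.cons_zero]
        _ = ∑ v : Fin (p + 1) → Fin n, lam (v 0) * Complex.normSq (tu v) := by
            exact Fintype.sum_equiv (Fin.consEquiv (fun _ => Fin n))
              (fun jK => lam ((Fin.cons jK.1 jK.2 : Fin (p + 1) → Fin n) 0) * Complex.normSq (tu (Fin.cons jK.1 jK.2)))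
              (fun v => lam (v 0) * Complex.normSq (tu v)) (fun jK => rfl)
    rw [hrw, ← Finset.sum_fiberwise (univ : Finset (Fin (p + 1) → Fin n))
      (fun v => Finset.image v Finset.univ) (fun v => lam (v 0) * Complex.normSq (tu v))]
    refine Finset.sum_nonneg fun S _ => ?_
    by_cases hS : S.card = p + 1
    · set e := S.orderIsoOfFin hS with he
      set w : Fin (p + 1) → Fin n := fun i => (e i : Fin n) with hwdef
      have hw_inj : Function.Injective w := fun a b hab => e.injective (Subtype.ext hab)
      have hw_mem : ∀ i, w i ∈ S := fun i => (e i).2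
      have himg : Finset.image w Finset.univ = S := by
        apply Finset.Subset.antisymm
        · intro x hx
          obtain ⟨i, _, rfl⟩ := Finset.mem_image.mp hx
          exact hw_mem i
        · intro x hx
          exact Finset.mem_image.mpr ⟨e.symm ⟨x, hx⟩, Finset.mem_univ _, by simp [hwdef]⟩
      have hbij : ∑ v ∈ univ.filter (fun v => Finset.image v Finset.univ = S),
            lam (v 0) * Complex.normSq (tu v)
          = ∑ π : Equiv.Perm (Fin (p + 1)), lam (w (π 0)) * Complex.normSq (tu (w ∘ π)) := by
        refine (Finset.sum_bij (fun (π : Equiv.Perm (Fin (p + 1))) _ => w ∘ π)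
          ?_ ?_ ?_ ?_).symm
        · intro π _
          refine Finset.mem_filter.mpr ⟨Finset.mem_univ _, ?_⟩
          rw [show Finset.image (w ∘ π) Finset.univ = Finset.image w (Finset.image π Finset.univ)
            from (Finset.image_image).symm, Finset.image_univ_equiv, himg]
        · intro π1 _ π2 _ h
          exact Equiv.ext fun i => hw_inj (congrFun h i)
        · intro v hv
          have hv' := (Finset.mem_filter.mp hv).2
          have hv_inj : Function.Injective v := by
            have hcard : (Finset.image v Finset.univ).card = (Finset.univ : Finset (Fin (p + 1))).card := by
              rw [hv', hS, Finset.card_univ, Fintype.card_fin]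
            have := Finset.card_image_iff.mp hcard
            rwa [Finset.coe_univ, Set.injOn_univ] at this
          have hvS : ∀ i, v i ∈ S := fun i => by
            rw [← hv']; exact Finset.mem_image_of_mem v (Finset.mem_univ i)
          have hg_inj : Function.Injective (fun i => e.symm ⟨v i, hvS i⟩) := by
            intro a b hab
            apply hv_inj
            have := congrArg (fun x => ((e x : S) : Fin n)) hab
            simpa using this
          refine ⟨Equiv.ofBijective _
            ((Fintype.bijective_iff_injective_and_card _).mpr ⟨hg_inj, rfl⟩),
            Finset.mem_univ _, ?_⟩
          funext i
          show w (e.symm ⟨v i, hvS i⟩) = v i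
          simp [hwdef]
        · intro π _
          rfl
      rw [hbij]
      have hnorm : ∀ π : Equiv.Perm (Fin (p + 1)),
          Complex.normSq (tu (w ∘ π)) = Complex.normSq (tu w) := by
        intro π
        rw [htalt w π]
        rcases Int.units_eq_one_or (Equiv.Perm.sign π) with h | h <;>
          simp [h, Complex.normSq_mul]
      have : ∑ π : Equiv.Perm (Fin (p + 1)), lam (w (π 0)) * Complex.normSq (tu (w ∘ π))
          = (∑ π : Equiv.Perm (Fin (p + 1)), lam (w (π 0))) * Complex.normSq (tu w) := by
        rw [Finset.sum_mul]
        exact Finset.sum_congr rfl fun π _ => by rw [hnorm π]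
      rw [this]
      refine mul_nonneg ?_ (Complex.normSq_nonneg _)
      have hdec : ∑ π : Equiv.Perm (Fin (p + 1)), lam (w (π 0))
          = ∑ x : Fin (p + 1) × Equiv.Perm (Fin p), lam (w x.1) := by
        refine (Fintype.sum_equiv Equiv.Perm.decomposeFin.symm
          (fun x : Fin (p + 1) × Equiv.Perm (Fin p) => lam (w x.1))
          (fun π : Equiv.Perm (Fin (p + 1)) => lam (w (π 0))) (fun x => ?_)).symm
        obtain ⟨a, σ⟩ := x
        show lam (w a) = lam (w ((Equiv.Perm.decomposeFin.symm (a, σ)) 0))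
        rw [Equiv.Perm.decomposeFin_symm_apply_zero]
      rw [hdec, Fintype.sum_prod_type]
      have hS' : 0 ≤ ∑ a : Fin (p + 1), lam (w a) := by
        have : ∑ a : Fin (p + 1), lam (w a) = ∑ x ∈ S, lam x := by
          rw [← Finset.sum_coe_sort S lam]
          exact Fintype.sum_equiv e.toEquiv (fun a => lam (w a))
            (fun x : {x // x ∈ S} => lam ↑x) fun a => rfl
        rw [this]
        exact hsum S hS
      calc (0:ℝ) ≤ (Fintype.card (Equiv.Perm (Fin p)) : ℝ) * ∑ a : Fin (p + 1), lam (w a) := by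
            positivity
        _ = ∑ a : Fin (p + 1), ∑ _σ : Equiv.Perm (Fin p), lam (w a) := by
            rw [Finset.mul_sum]
            exact Finset.sum_congr rfl fun a _ => by
              rw [Finset.sum_const, Finset.card_univ, nsmul_eq_mul]
    · refine Finset.sum_nonneg fun v hv => ?_
      have hv' := (Finset.mem_filter.mp hv).2
      have hvni : ¬ Function.Injective v := by
        intro hinj
        apply hS
        rw [← hv', Finset.card_image_of_injective _ hinj, Finset.card_univ, Fintype.card_fin]
      rw [alt_vanish tu htalt v hvni]
      simp




/-- If `B` is an `n × n` Hermitian matrix such that the sum of any `q` of its eigenvalues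
(counted with multiplicity) is nonnegative, then the Hermitian form
`Σ_K Σ_{j,k} B_{jk} u_{jK} conj(u_{kK})` is real and nonnegative on alternating
`q`-tuples of coefficients `u`. -/
theorem levi_form_nonneg_on_alternating
    {n : ℕ} (hn : 1 ≤ n) (q : ℕ) (hq1 : 1 ≤ q) (hqn : q ≤ n)
    (B : Matrix (Fin n) (Fin n) ℂ) (hB : B.IsHermitian)
    (hsum : ∀ S : Finset (Fin n), S.card = q → 0 ≤ ∑ i ∈ S, hB.eigenvalues i)
    (u : (Fin q → Fin n) → ℂ)
    (halt : ∀ (v : Fin q → Fin n) (π : Equiv.Perm (Fin q)),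
      u (v ∘ π) = ((Equiv.Perm.sign π : ℤ) : ℂ) * u v)
    (hzero : ∀ v : Fin q → Fin n, ¬ Function.Injective v → u v = 0) :
    (∑ K : Fin (q - 1) → Fin n, ∑ j : Fin n, ∑ k : Fin n,
        B j k * u (Fin.cons j K ∘ Fin.cast (Nat.succ_pred_eq_of_pos hq1).symm)
          * conj (u (Fin.cons k K ∘ Fin.cast (Nat.succ_pred_eq_of_pos hq1).symm))).im = 0 ∧
      0 ≤ (∑ K : Fin (q - 1) → Fin n, ∑ j : Fin n, ∑ k : Fin n,
        B j k * u (Fin.cons j K ∘ Fin.cast (Nat.succ_pred_eq_of_pos hq1).symm)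
          * conj (u (Fin.cons k K ∘ Fin.cast (Nat.succ_pred_eq_of_pos hq1).symm))).re := by

  have hq : q = (q - 1) + 1 := (Nat.succ_pred_eq_of_pos hq1).symm
  have halt' : ∀ (v : Fin ((q - 1) + 1) → Fin n) (π : Equiv.Perm (Fin ((q - 1) + 1))),
      (fun v : Fin ((q - 1) + 1) → Fin n => u (v ∘ Fin.cast hq)) (v ∘ π)
        = ((Equiv.Perm.sign π : ℤ) : ℂ)
          * (fun v : Fin ((q - 1) + 1) → Fin n => u (v ∘ Fin.cast hq)) v := by
    intro v π
    have hsign := Equiv.Perm.sign_permCongr (finCongr hq).symm π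
    have hfun : (v ∘ π) ∘ Fin.cast hq
        = (v ∘ Fin.cast hq) ∘ ((finCongr hq).symm.permCongr π) := by
      funext x
      simp [Equiv.permCongr_apply, Fin.ext_iff]
    show u ((v ∘ π) ∘ Fin.cast hq) = _
    rw [hfun, halt (v ∘ Fin.cast hq) _, hsign]
  obtain ⟨r, hr, hr0⟩ := levi_key (p := q - 1) B hB
    (fun S hS => hsum S (by omega))
    (fun v : Fin ((q - 1) + 1) → Fin n => u (v ∘ Fin.cast hq)) halt'
  have hr' : (∑ K : Fin (q - 1) → Fin n, ∑ j : Fin n, ∑ k : Fin n,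
        B j k * u (Fin.cons j K ∘ Fin.cast (Nat.succ_pred_eq_of_pos hq1).symm)
          * conj (u (Fin.cons k K ∘ Fin.cast (Nat.succ_pred_eq_of_pos hq1).symm))) = (r : ℂ) := hr
  rw [hr']
  exact ⟨Complex.ofReal_im r, by rwa [Complex.ofReal_re]⟩
end

section
/- Let X, Y, W be complex Hilbert spaces, let T : X → Y be a bounded linear operator, and let K : X → W be a compact injective bounded linear operator. Then T is compact if and only if for every ε > 0 there exists a constant C_ε ≥ 0 such that ‖T x‖ ≤ ε‖x‖ + C_ε‖K x‖ for all x ∈ X. -/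
open Metric Filter Topology

local notation "⟪" x ", " y "⟫" => @inner ℂ _ _ x y

/-- A bounded operator `T` between complex Hilbert spaces is compact if and only if for
every `ε > 0` there is `C_ε ≥ 0` with `‖T x‖ ≤ ε ‖x‖ + C_ε ‖K x‖`, where `K` is a compact
injective bounded operator. -/
theorem isCompactOperator_iff_compactness_estimates
    {X Y W : Type*}
    [NormedAddCommGroup X] [InnerProductSpace ℂ X] [CompleteSpace X]
    [NormedAddCommGroup Y] [InnerProductSpace ℂ Y] [CompleteSpace Y]
    [NormedAddCommGroup W] [InnerProductSpace ℂ W] [CompleteSpace W]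
    (T : X →L[ℂ] Y) (K : X →L[ℂ] W)
    (hK_compact : IsCompactOperator (⇑K))
    (hK_inj : Function.Injective (⇑K)) :
    IsCompactOperator (⇑T) ↔
      ∀ ε > (0 : ℝ), ∃ C ≥ (0 : ℝ), ∀ x : X, ‖T x‖ ≤ ε * ‖x‖ + C * ‖K x‖ := by
  constructor
  · -- forward direction: compactness implies the estimates
    intro hT
    by_contra hcon
    push_neg at hcon
    obtain ⟨ε, hε, hfail⟩ := hcon
    -- for each n, pick a bad vector
    have hpick : ∀ n : ℕ, ∃ u : X, ‖u‖ = 1 ∧ ε + n * ‖K u‖ < ‖T u‖ := by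
      intro n
      obtain ⟨x, hx⟩ := hfail n (Nat.cast_nonneg n)
      have hx0 : x ≠ 0 := by
        rintro rfl
        simp at hx
      refine ⟨‖x‖⁻¹ • x, ?_, ?_⟩
      · rw [norm_smul, norm_inv, norm_norm, inv_mul_cancel₀ (norm_ne_zero_iff.mpr hx0)]
      · have hxpos : (0:ℝ) < ‖x‖ := norm_pos_iff.mpr hx0
        rw [T.map_smul_of_tower, K.map_smul_of_tower, norm_smul, norm_smul, norm_inv, norm_norm]
        calc ε + n * (‖x‖⁻¹ * ‖K x‖) = (ε * ‖x‖ + n * ‖K x‖) * ‖x‖⁻¹ := by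
              field_simp
          _ < ‖T x‖ * ‖x‖⁻¹ := by
              apply mul_lt_mul_of_pos_right hx (inv_pos.mpr hxpos)
          _ = ‖x‖⁻¹ * ‖T x‖ := mul_comm _ _
      -- done
    choose u hu1 hu2 using hpick
    -- K u n tends to 0
    have hKu0 : Tendsto (fun n => K (u n)) atTop (𝓝 0) := by
      have hbound : ∀ n : ℕ, 1 ≤ n → ‖K (u n)‖ ≤ ‖T‖ / n := by
        intro n hn
        have hnpos : (0:ℝ) < n := by exact_mod_cast hn
        rw [le_div_iff₀ hnpos]
        have hTu : ‖T (u n)‖ ≤ ‖T‖ := by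
          calc ‖T (u n)‖ ≤ ‖T‖ * ‖u n‖ := T.le_opNorm _
            _ = ‖T‖ := by rw [hu1 n, mul_one]
        nlinarith [hu2 n, hε]
      rw [tendsto_zero_iff_norm_tendsto_zero]
      apply squeeze_zero' (Eventually.of_forall fun n => norm_nonneg _)
        (eventually_atTop.mpr ⟨1, hbound⟩) (tendsto_const_div_atTop_nhds_zero_nat ‖T‖)
    -- extract convergent subsequence of T (u n)
    obtain ⟨M, hM, hMsub⟩ :=
      (isCompactOperator_iff_image_closedBall_subset_compact (T : X →ₗ[ℂ] Y) one_pos).mp hT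
    have humem : ∀ n, T (u n) ∈ M := by
      intro n
      apply hMsub
      exact ⟨u n, by simp [mem_closedBall, dist_eq_norm, (hu1 n).le], rfl⟩
    obtain ⟨y, _, φ, hφ, hy⟩ := hM.tendsto_subseq humem
    -- ‖y‖ ≥ ε
    have hynorm : ε ≤ ‖y‖ := by
      apply ge_of_tendsto (hy.norm)
      apply Eventually.of_forall
      intro n
      have := hu2 (φ n)
      have : ε < ‖T (u (φ n))‖ := by nlinarith [mul_nonneg (Nat.cast_nonneg (φ n)) (norm_nonneg (K (u (φ n))))]
      exact this.le
    -- adjoints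
    set A := ContinuousLinearMap.adjoint T with hA
    set B := ContinuousLinearMap.adjoint K with hB
    -- range of B is dense
    have hdense : (LinearMap.range (B : W →ₗ[ℂ] X)).topologicalClosure = ⊤ := by
      rw [Submodule.topologicalClosure_eq_top_iff]
      rw [Submodule.eq_bot_iff]
      intro x hx
      have hKx : K x = 0 := by
        have := hx (B (K x)) (LinearMap.mem_range_self _ _)
        rw [ContinuousLinearMap.adjoint_inner_left] at this
        exact inner_self_eq_zero.mp this
      have := hK_inj (hKx.trans (map_zero K).symm)
      exact this
    have hmemcl : A y ∈ closure ((LinearMap.range (B : W →ₗ[ℂ] X) : Submodule ℂ X) : Set X) := by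
      rw [← Submodule.topologicalClosure_coe, hdense]
      trivial
    -- show ‖y‖ * ‖y‖ ≤ δ for all δ > 0
    have hkey : ∀ δ : ℝ, 0 < δ → ‖y‖ * ‖y‖ ≤ δ := by
      intro δ hδ
      obtain ⟨b, hbmem, hbd⟩ := Metric.mem_closure_iff.mp hmemcl δ hδ
      obtain ⟨w, rfl⟩ := hbmem
      -- the inner products converge
      have h1 : Tendsto (fun n => ⟪y, T (u (φ n))⟫) atTop (𝓝 ⟪y, y⟫) :=
        tendsto_const_nhds.inner hy
      have h2 : Tendsto (fun n => ⟪B w, u (φ n)⟫) atTop (𝓝 0) := by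
        have : ∀ n, ⟪B w, u (φ n)⟫ = ⟪w, K (u (φ n))⟫ := fun n =>
          ContinuousLinearMap.adjoint_inner_left K _ _
        simp only [this]
        have hKφ : Tendsto (fun n => K (u (φ n))) atTop (𝓝 0) :=
          hKu0.comp hφ.tendsto_atTop
        have h : Tendsto (fun n : ℕ => ⟪w, K (u (φ n))⟫) atTop (𝓝 (⟪w, (0:W)⟫)) :=
          Tendsto.inner (𝕜 := ℂ) tendsto_const_nhds hKφ
        simpa using h
      have h3 : Tendsto (fun n => ⟪A y - B w, u (φ n)⟫) atTop (𝓝 ⟪y, y⟫) := by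
        have heq : ∀ n, ⟪A y - B w, u (φ n)⟫ = ⟪y, T (u (φ n))⟫ - ⟪B w, u (φ n)⟫ := by
          intro n
          rw [inner_sub_left, ContinuousLinearMap.adjoint_inner_left]
        simp only [heq]
        simpa using h1.sub h2
      have hbdd : ∀ n, ‖⟪A y - B w, u (φ n)⟫‖ ≤ δ := by
        intro n
        calc ‖⟪A y - B w, u (φ n)⟫‖ ≤ ‖A y - B w‖ * ‖u (φ n)‖ := norm_inner_le_norm _ _
          _ = ‖A y - B w‖ := by rw [hu1, mul_one]
          _ ≤ δ := by
            rw [dist_eq_norm] at hbd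
            exact hbd.le
      have : ‖⟪y, y⟫‖ ≤ δ := le_of_tendsto h3.norm (Eventually.of_forall hbdd)
      calc ‖y‖ * ‖y‖ = ‖⟪y, y⟫‖ := by
            rw [@inner_self_eq_norm_sq_to_K ℂ, norm_pow]
            simp [sq]
        _ ≤ δ := this
    have hle : ‖y‖ * ‖y‖ ≤ 0 :=
      le_of_forall_pos_le_add fun δ hδ => by simpa using hkey δ hδ
    nlinarith [hε, hynorm]
  · -- backward direction: estimates imply compactness
    intro hest
    rw [← ContinuousLinearMap.coe_coe T,
      isCompactOperator_iff_isCompact_closure_image_closedBall (T : X →ₗ[ℂ] Y) one_pos]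
    apply TotallyBounded.isCompact_of_isClosed _ isClosed_closure
    rw [totallyBounded_closure]
    rw [Metric.totallyBounded_iff]
    intro δ hδ
    obtain ⟨C, hC, hCest⟩ := hest (δ/8) (by linarith)
    -- K image of ball is totally bounded
    obtain ⟨MK, hMK, hMKsub⟩ :=
      (isCompactOperator_iff_image_closedBall_subset_compact (K : X →ₗ[ℂ] W) one_pos).mp hK_compact
    have htbK : TotallyBounded (⇑K '' closedBall 0 1) :=
      hMK.totallyBounded.subset hMKsub
    set δ' := δ / (2 * (C + 1)) with hδ'
    have hδ'pos : 0 < δ' := by positivity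
    obtain ⟨t, htsub, htfin, htcov⟩ := finite_approx_of_totallyBounded htbK δ' hδ'pos
    classical
    -- choose preimages
    have hchoice : ∀ z ∈ t, ∃ x ∈ closedBall (0:X) 1, K x = z := by
      intro z hz
      obtain ⟨x, hx, rfl⟩ := htsub hz
      exact ⟨x, hx, rfl⟩
    choose! g hg1 hg2 using hchoice
    refine ⟨(fun z => T (g z)) '' t, htfin.image _, ?_⟩
    rintro _ ⟨x, hx, rfl⟩
    have hKx : K x ∈ ⇑K '' closedBall 0 1 := ⟨x, hx, rfl⟩
    obtain ⟨z, hz, hzball⟩ := Set.mem_iUnion₂.mp (htcov hKx)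
    refine Set.mem_iUnion₂.mpr ⟨T (g z), ⟨z, hz, rfl⟩, ?_⟩
    simp only [ContinuousLinearMap.coe_coe]
    rw [mem_ball, dist_eq_norm, ← map_sub]
    have hxn : ‖x‖ ≤ 1 := by rwa [mem_closedBall, dist_zero_right] at hx
    have hgn : ‖g z‖ ≤ 1 := by
      have := hg1 z hz
      rwa [mem_closedBall, dist_zero_right] at this
    have hKdist : ‖K x - K (g z)‖ < δ' := by
      rw [← hg2 z hz] at hzball
      rwa [mem_ball, dist_eq_norm] at hzball
    calc ‖T (x - g z)‖ ≤ δ/8 * ‖x - g z‖ + C * ‖K (x - g z)‖ := hCest _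
      _ ≤ δ/8 * 2 + C * δ' := by
          apply add_le_add
          · apply mul_le_mul_of_nonneg_left _ (by linarith)
            calc ‖x - g z‖ ≤ ‖x‖ + ‖g z‖ := norm_sub_le _ _
              _ ≤ 2 := by linarith
          · rw [map_sub]
            exact mul_le_mul_of_nonneg_left hKdist.le hC
      _ < δ := by
          have hCδ' : C * δ' ≤ δ / 2 := by
            have hmul : δ' * (2 * (C + 1)) = δ := by
              rw [hδ']
              field_simp
            nlinarith [hδ'pos.le]
          linarith
end

section
/- Let H₀ and H₁ be complex Hilbert spaces and let T be a closed, densely defined linear operator from H₀ to H₁ with closed range, with Hilbert-space adjoint T*. Suppose S : H₁ → H₀ is a bounded operator such that S y = 0 for every y orthogonal to Ran(T), and for every y ∈ Ran(T): S y ∈ dom(T), S y ⊥ ker(T), and T(S y) = y. Suppose S' : H₀ → H₁ is a bounded operator such that S' x = 0 for every x orthogonal to Ran(T*), and for every x ∈ Ran(T*): S' x ∈ dom(T*), S' x ⊥ ker(T*), and T*(S' x) = x. Then S' equals the Hilbert-space adjoint S* of S; in particular, S is compact if and only if S' is compact. -/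
open ContinuousLinearMap Metric

local notation "⟪" x ", " y "⟫" => @inner ℂ _ _ x y

lemma my_adjoint_isCompact {E F : Type*}
    [NormedAddCommGroup E] [InnerProductSpace ℂ E] [CompleteSpace E]
    [NormedAddCommGroup F] [InnerProductSpace ℂ F] [CompleteSpace F]
    (S : E →L[ℂ] F) (hS : IsCompactOperator ⇑S) :
    IsCompactOperator ⇑(ContinuousLinearMap.adjoint S) := by
  set A := ContinuousLinearMap.adjoint S with hA
  rw [show (⇑A : F → E) = ⇑(A : F →ₗ[ℂ] E) from rfl] at *
  rw [isCompactOperator_iff_isCompact_closure_image_closedBall (A : F →ₗ[ℂ] E) one_pos]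
  rw [isCompact_iff_isSeqCompact]
  intro u hu
  -- approximate u n by elements of the image
  have hux : ∀ n : ℕ, ∃ x : F, ‖x‖ ≤ 1 ∧ dist (u n) (A x) < 1 / (n + 1) := by
    intro n
    have h1 : (0:ℝ) < 1 / (n + 1) := by positivity
    obtain ⟨v, hv, hvd⟩ := Metric.mem_closure_iff.mp (hu n) _ h1
    obtain ⟨x, hx, rfl⟩ := hv
    exact ⟨x, by simpa [Metric.mem_closedBall] using hx, hvd⟩
  choose x hx hxd using hux
  -- the sequence S (A x n) lies in a compact set
  have hSAx : ∀ n, S (A (x n)) ∈ closure (⇑S '' Metric.closedBall 0 ‖A‖) := by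
    intro n
    apply subset_closure
    exact ⟨A (x n), by
      simpa [Metric.mem_closedBall, dist_eq_norm] using
        (A.le_opNorm (x n)).trans (by nlinarith [hx n, A.opNorm_nonneg]), rfl⟩
  have hK : IsCompact (closure (⇑S '' Metric.closedBall 0 ‖A‖)) := by
    have := hS.isCompact_closure_image_of_bounded (𝕜₁ := ℂ)
      (f := (S : E →ₗ[ℂ] F)) (Metric.isBounded_closedBall (x := (0:E)) (r := ‖A‖))
    simpa using this
  obtain ⟨z, hz, φ, hφ, hφt⟩ :=
    (isCompact_iff_isSeqCompact.mp hK) hSAx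
  -- A (x (φ n)) is Cauchy
  have hkey : ∀ i j : ℕ, ‖A (x i) - A (x j)‖ ^ 2 ≤ 2 * ‖S (A (x i)) - S (A (x j))‖ := by
    intro i j
    have h1 : (‖A (x i) - A (x j)‖ : ℝ) ^ 2 = RCLike.re ⟪A (x i) - A (x j), A (x i) - A (x j)⟫ := by
      rw [← inner_self_eq_norm_sq (𝕜 := ℂ)]
    have h2 : ⟪A (x i) - A (x j), A (x i) - A (x j)⟫ = ⟪x i - x j, S (A (x i)) - S (A (x j))⟫ := by
      rw [← map_sub A (x i) (x j), hA, ContinuousLinearMap.adjoint_inner_left]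
      simp [map_sub, inner_sub_left, inner_sub_right]
    have h3 : RCLike.re ⟪x i - x j, S (A (x i)) - S (A (x j))⟫ ≤
        ‖x i - x j‖ * ‖S (A (x i)) - S (A (x j))‖ := by
      calc RCLike.re ⟪x i - x j, S (A (x i)) - S (A (x j))⟫
          ≤ ‖(⟪x i - x j, S (A (x i)) - S (A (x j))⟫ : ℂ)‖ := RCLike.re_le_norm _
        _ ≤ _ := norm_inner_le_norm _ _
    have h4 : ‖x i - x j‖ ≤ 2 := by
      calc ‖x i - x j‖ ≤ ‖x i‖ + ‖x j‖ := norm_sub_le _ _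
        _ ≤ 2 := by linarith [hx i, hx j]
    have h5 : ‖A (x i) - A (x j)‖ ^ 2 ≤ ‖x i - x j‖ * ‖S (A (x i)) - S (A (x j))‖ := by
      rw [h1, h2]; exact h3
    nlinarith [norm_nonneg (S (A (x i)) - S (A (x j)))]
  have hcauchy : CauchySeq (fun n => A (x (φ n))) := by
    rw [Metric.cauchySeq_iff]
    intro ε hε
    have hSc : CauchySeq (fun n => S (A (x (φ n)))) := hφt.cauchySeq
    rw [Metric.cauchySeq_iff] at hSc
    obtain ⟨N, hN⟩ := hSc (ε ^ 2 / 2) (by positivity)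
    refine ⟨N, fun m hm n hn => ?_⟩
    have := hkey (φ m) (φ n)
    have hd := hN m hm n hn
    rw [dist_eq_norm] at hd ⊢
    nlinarith [norm_nonneg (A (x (φ m)) - A (x (φ n))), sq_nonneg (‖A (x (φ m)) - A (x (φ n))‖ - ε)]
  obtain ⟨w, hw⟩ := cauchySeq_tendsto_of_complete hcauchy
  refine ⟨w, ?_, φ, hφ, ?_⟩
  · have : ∀ n, A (x (φ n)) ∈ closure (⇑(A : F →ₗ[ℂ] E) '' Metric.closedBall 0 1) := fun n =>
      subset_closure ⟨x (φ n), by simpa [Metric.mem_closedBall, dist_eq_norm] using hx (φ n), rfl⟩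
    exact isClosed_closure.mem_of_tendsto hw (Filter.Eventually.of_forall this)
  · -- u (φ n) → w
    have hdist : Filter.Tendsto (fun n => dist (A (x (φ n))) (u (φ n))) Filter.atTop (nhds 0) := by
      have h0 : ∀ n : ℕ, dist (A (x (φ n))) (u (φ n)) ≤ 1 / (n + 1) := by
        intro n
        rw [dist_comm]
        exact le_trans (hxd (φ n)).le (by
          have h2 : n ≤ φ n := hφ.le_apply
          have : (n:ℝ) + 1 ≤ (φ n : ℝ) + 1 := by push_cast; linarith [(Nat.cast_le (α := ℝ)).mpr h2]
          gcongr)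
      have h1 : Filter.Tendsto (fun n : ℕ => 1 / ((n:ℝ) + 1)) Filter.atTop (nhds 0) :=
        tendsto_one_div_add_atTop_nhds_zero_nat
      exact squeeze_zero (fun n => dist_nonneg) h0 h1
    exact hw.congr_dist hdist



/-- The canonical solution operator `S` of a closed, densely defined operator `T` with
closed range and the canonical solution operator `S'` of its adjoint `T†` are adjoints of
each other: `S' = S*`; in particular `S` is compact iff `S'` is compact. -/
theorem canonical_solution_operators_adjoint
    {H₀ H₁ : Type*}
    [NormedAddCommGroup H₀] [InnerProductSpace ℂ H₀] [CompleteSpace H₀]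
    [NormedAddCommGroup H₁] [InnerProductSpace ℂ H₁] [CompleteSpace H₁]
    (T : H₀ →ₗ.[ℂ] H₁)
    (hdense : Dense (T.domain : Set H₀))
    (hclosed : T.IsClosed)
    (hrange : IsClosed ((LinearMap.range T.toFun : Submodule ℂ H₁) : Set H₁))
    (S : H₁ →L[ℂ] H₀)
    (hS_zero : ∀ y ∈ (LinearMap.range T.toFun)ᗮ, S y = 0)
    (hS_sol : ∀ y ∈ LinearMap.range T.toFun,
      ∃ hy : S y ∈ T.domain,
        S y ∈ ((LinearMap.ker T.toFun).map T.domain.subtype)ᗮ ∧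
        T ⟨S y, hy⟩ = y)
    (S' : H₀ →L[ℂ] H₁)
    (hS'_zero : ∀ x ∈ (LinearMap.range T.adjoint.toFun)ᗮ, S' x = 0)
    (hS'_sol : ∀ x ∈ LinearMap.range T.adjoint.toFun,
      ∃ hx : S' x ∈ T.adjoint.domain,
        S' x ∈ ((LinearMap.ker T.adjoint.toFun).map T.adjoint.domain.subtype)ᗮ ∧
        T.adjoint ⟨S' x, hx⟩ = x) :
    S' = ContinuousLinearMap.adjoint S ∧
      (IsCompactOperator (⇑S) ↔ IsCompactOperator (⇑S')) := by
  set R : Submodule ℂ H₁ := LinearMap.range T.toFun with hR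
  set R' : Submodule ℂ H₀ := LinearMap.range T.adjoint.toFun with hR'
  haveI : CompleteSpace R := hrange.completeSpace_coe
  -- Key 1 : the solution operator S maps R into the range of the adjoint.
  have key1 : ∀ y ∈ R, S y ∈ R' := by
    intro y hy
    obtain ⟨hy₁, hperp, hTy⟩ := hS_sol y hy
    set v : H₀ := S y with hv
    have hinner : ∀ z : T.domain, ⟪(ContinuousLinearMap.adjoint S v : H₁), T z⟫
        = ⟪v, (z : H₀)⟫ := by
      intro z
      rw [ContinuousLinearMap.adjoint_inner_left]
      obtain ⟨hz₁, hzperp, hTz⟩ := hS_sol (T z) ⟨z, rfl⟩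
      have hker : (z : H₀) - S (T z) ∈ (LinearMap.ker T.toFun).map T.domain.subtype := by
        refine ⟨z - ⟨S (T z), hz₁⟩, ?_, rfl⟩
        simp only [SetLike.mem_coe, LinearMap.mem_ker, map_sub]
        change T z - T ⟨S (T z), hz₁⟩ = 0
        rw [hTz, sub_self]
      have h0 : ⟪(z : H₀) - S (T z), v⟫ = 0 :=
        (Submodule.mem_orthogonal _ v).mp hperp _ hker
      have h0' : ⟪v, (z : H₀) - S (T z)⟫ = 0 := by
        rw [← inner_conj_symm, h0, map_zero]
      rw [inner_sub_right, sub_eq_zero] at h0'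
      exact h0'.symm
    have hu : (ContinuousLinearMap.adjoint S v : H₁) ∈ T.adjoint.domain :=
      T.mem_adjoint_domain_of_exists _ ⟨v, fun x => (hinner x).symm⟩
    have heq : T.adjoint ⟨ContinuousLinearMap.adjoint S v, hu⟩ = v :=
      LinearPMap.adjoint_apply_eq hdense _ (fun x => (hinner x).symm)
    exact ⟨⟨_, hu⟩, heq⟩
  -- Key 2 : vectors orthogonal to R lie in the kernel of the adjoint.
  have key2 : ∀ y ∈ Rᗮ,
      y ∈ (LinearMap.ker T.adjoint.toFun).map T.adjoint.domain.subtype := by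
    intro y hy
    have hinner : ∀ z : T.domain, ⟪y, T z⟫ = (0 : ℂ) := by
      intro z
      have h0 : ⟪(T z : H₁), y⟫ = 0 := (Submodule.mem_orthogonal _ y).mp hy _ ⟨z, rfl⟩
      rw [← inner_conj_symm, h0, map_zero]
    have hu : y ∈ T.adjoint.domain :=
      T.mem_adjoint_domain_of_exists _ ⟨0, fun x => by
        rw [inner_zero_left, hinner x]⟩
    have heq : T.adjoint ⟨y, hu⟩ = 0 :=
      LinearPMap.adjoint_apply_eq hdense _ (fun x => by
        rw [inner_zero_left, hinner x])
    exact ⟨⟨y, hu⟩, by simp only [SetLike.mem_coe, LinearMap.mem_ker]; exact heq, rfl⟩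
  -- the main identity on the range of the adjoint
  have h0 : ∀ x ∈ R', ∀ y, ⟪S' x, y⟫ = ⟪x, S y⟫ := by
    intro x hx y
    obtain ⟨hx₁, hxperp, hTx⟩ := hS'_sol x hx
    obtain ⟨y₁, hy₁, y₂, hy₂, rfl⟩ := R.exists_add_mem_mem_orthogonal y
    obtain ⟨hSy₁, -, hTSy₁⟩ := hS_sol y₁ hy₁
    have hSy₂ : S y₂ = 0 := hS_zero y₂ hy₂
    have e1 : ⟪S' x, y₂⟫ = 0 := by
      have h := (Submodule.mem_orthogonal _ (S' x)).mp hxperp _ (key2 y₂ hy₂)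
      rw [← inner_conj_symm, h, map_zero]
    have e2 : ⟪S' x, y₁⟫ = ⟪x, S y₁⟫ := by
      have hfa := (T.adjoint_isFormalAdjoint hdense) ⟨S' x, hx₁⟩ ⟨S y₁, hSy₁⟩
      simp only at hfa
      rw [hTx] at hfa
      change ⟪x, S y₁⟫ = ⟪S' x, T ⟨S y₁, hSy₁⟩⟫ at hfa
      rw [hTSy₁] at hfa
      exact hfa.symm
    simp [inner_add_right, map_add, hSy₂, e1, e2]
  -- the main identity on the orthogonal complement of the range of the adjoint
  have h1 : ∀ x ∈ R'ᗮ, ∀ y, ⟪S' x, y⟫ = ⟪x, S y⟫ := by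
    intro x hx y
    rw [hS'_zero x hx, inner_zero_left]
    obtain ⟨y₁, hy₁, y₂, hy₂, rfl⟩ := R.exists_add_mem_mem_orthogonal y
    have hSy₂ : S y₂ = 0 := hS_zero y₂ hy₂
    have e1 : ⟪x, S y₁⟫ = 0 := by
      have h := (Submodule.mem_orthogonal _ x).mp hx _ (key1 y₁ hy₁)
      rw [← inner_conj_symm, h, map_zero]
    simp [map_add, hSy₂, inner_add_right, e1]
  -- the main identity everywhere, by density
  have main : ∀ x y, ⟪S' x, y⟫ = ⟪x, S y⟫ := by
    intro x y
    set M : Submodule ℂ H₀ := R'.topologicalClosure with hM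
    haveI : CompleteSpace M := R'.isClosed_topologicalClosure.completeSpace_coe
    obtain ⟨x₁, hx₁, x₂, hx₂, rfl⟩ := M.exists_add_mem_mem_orthogonal x
    have hx₂' : x₂ ∈ R'ᗮ := Submodule.orthogonal_le (R'.le_topologicalClosure) hx₂
    have e1 : ⟪S' x₁, y⟫ = ⟪x₁, S y⟫ := by
      have hf : Continuous fun z : H₀ => ⟪S' z, y⟫ := Continuous.inner S'.continuous
        continuous_const
      have hg : Continuous fun z : H₀ => ⟪z, S y⟫ := Continuous.inner continuous_id
        continuous_const
      have heqon : Set.EqOn (fun z : H₀ => ⟪S' z, y⟫) (fun z : H₀ => ⟪z, S y⟫)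
          (R' : Set H₀) := fun z hz => h0 z hz y
      have hcl : x₁ ∈ closure (R' : Set H₀) := hx₁
      exact heqon.closure hf hg hcl
    rw [inner_add_left, map_add, inner_add_left, e1, h1 x₂ hx₂' y]
  have hadj : S' = ContinuousLinearMap.adjoint S := by
    ext x
    refine ext_inner_right ℂ fun v => ?_
    rw [main x v, ContinuousLinearMap.adjoint_inner_left]
  refine ⟨hadj, ?_⟩
  constructor
  · intro h
    rw [hadj]
    exact my_adjoint_isCompact S h
  · intro h
    rw [hadj] at h
    have := my_adjoint_isCompact (ContinuousLinearMap.adjoint S) h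
    rwa [ContinuousLinearMap.adjoint_adjoint] at this
end

section
/- Let H₀, H₁, W be complex Hilbert spaces, let T be a closed, densely defined linear operator from H₀ to H₁ with closed range, let S : H₁ → H₀ be the canonical solution operator of T (i.e. a bounded operator with S y = 0 for every y orthogonal to Ran(T), and for every y ∈ Ran(T): S y ∈ dom(T), S y ⊥ ker(T), and T(S y) = y), and let ι : H₀ → W be a compact injective bounded linear operator. Then S is compact if and only if for every ε > 0 there exists a constant C_ε ≥ 0 such that ‖u‖ ≤ ε‖T u‖ + C_ε‖ι u‖ for every u ∈ dom(T) with u ⊥ ker(T). -/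
/-- The canonical solution operator `S` of a closed, densely defined operator `T` with
closed range is compact if and only if the family of compactness estimates
`‖u‖ ≤ ε ‖T u‖ + C_ε ‖ι u‖` holds for all `u ∈ dom T` with `u ⊥ ker T`, where `ι` is a
compact injective bounded operator. -/
theorem canonical_solution_compact_iff_compactness_estimates
    {H₀ H₁ W : Type*}
    [NormedAddCommGroup H₀] [InnerProductSpace ℂ H₀] [CompleteSpace H₀]
    [NormedAddCommGroup H₁] [InnerProductSpace ℂ H₁] [CompleteSpace H₁]
    [NormedAddCommGroup W] [InnerProductSpace ℂ W] [CompleteSpace W]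
    (T : H₀ →ₗ.[ℂ] H₁)
    (hdense : Dense (T.domain : Set H₀))
    (hclosed : T.IsClosed)
    (hrange : IsClosed ((LinearMap.range T.toFun : Submodule ℂ H₁) : Set H₁))
    (S : H₁ →L[ℂ] H₀)
    (hS_zero : ∀ y ∈ (LinearMap.range T.toFun)ᗮ, S y = 0)
    (hS_sol : ∀ y ∈ LinearMap.range T.toFun,
      ∃ hy : S y ∈ T.domain,
        S y ∈ ((LinearMap.ker T.toFun).map T.domain.subtype)ᗮ ∧
        T ⟨S y, hy⟩ = y)
    (ι : H₀ →L[ℂ] W)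
    (hι_compact : IsCompactOperator (⇑ι))
    (hι_inj : Function.Injective (⇑ι)) :
    IsCompactOperator (⇑S) ↔
      ∀ ε > (0 : ℝ), ∃ C ≥ (0 : ℝ), ∀ u : T.domain,
        (u : H₀) ∈ ((LinearMap.ker T.toFun).map T.domain.subtype)ᗮ →
        ‖(u : H₀)‖ ≤ ε * ‖T u‖ + C * ‖ι (u : H₀)‖ := by
  classical
  set K : Submodule ℂ H₀ := (LinearMap.ker T.toFun).map T.domain.subtype with hKdef
  -- Key fact 1: `S (T u) = u` whenever `u ∈ dom T` and `u ⊥ ker T`.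
  have key : ∀ u : T.domain, (u : H₀) ∈ Kᗮ → S (T u) = (u : H₀) := by
    intro u hu
    obtain ⟨hy, horth, hTS⟩ := hS_sol (T u) ⟨u, rfl⟩
    have hmem : (u : H₀) - S (T u) ∈ K := by
      refine Submodule.mem_map.mpr ⟨u - ⟨S (T u), hy⟩, LinearMap.mem_ker.mpr ?_, rfl⟩
      show T (u - ⟨S (T u), hy⟩) = 0
      rw [T.map_sub, hTS, sub_self]
    have hmem' : (u : H₀) - S (T u) ∈ Kᗮ := Submodule.sub_mem _ hu horth
    have h0 : (u : H₀) - S (T u) = 0 := by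
      have := hmem' _ hmem
      exact inner_self_eq_zero.mp this
    have := sub_eq_zero.mp h0
    exact this.symm
  -- Key fact 2: for every `y`, `S y ∈ dom T`, `S y ⊥ ker T`, and `‖T (S y)‖ ≤ ‖y‖`.
  haveI hRC : CompleteSpace (LinearMap.range T.toFun : Submodule ℂ H₁) :=
    hrange.completeSpace_coe
  have sol : ∀ y : H₁, ∃ h : S y ∈ T.domain,
      S y ∈ Kᗮ ∧ ‖T ⟨S y, h⟩‖ ≤ ‖y‖ := by
    intro y
    set R := LinearMap.range T.toFun with hR
    set p : H₁ := (Submodule.orthogonalProjectionOnto R y : H₁) with hp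
    have hpR : p ∈ R := (Submodule.orthogonalProjectionOnto R y).2
    obtain ⟨hy, horth, hTS⟩ := hS_sol p hpR
    have hSy : S y = S p := by
      have h0 : S (y - p) = 0 := hS_zero _ (Submodule.sub_starProjection_mem_orthogonal (K := R) y)
      have h1 : S y - S p = 0 := by rw [← map_sub]; exact h0
      exact sub_eq_zero.mp h1
    have hdom : S y ∈ T.domain := by rw [hSy]; exact hy
    refine ⟨hdom, by rw [hSy]; exact horth, ?_⟩
    have heq : (⟨S y, hdom⟩ : T.domain) = ⟨S p, hy⟩ := Subtype.ext hSy
    rw [heq, hTS]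
    have h2 : ‖(Submodule.orthogonalProjectionOnto R y : H₁)‖ ≤ 1 * ‖y‖ :=
      (Submodule.orthogonalProjectionOnto R).le_of_opNorm_le_of_le (Submodule.orthogonalProjectionOnto_norm_le R) le_rfl
    rw [one_mul] at h2; exact h2
  constructor
  · -- compactness of `S` implies the estimates
    intro hcpt ε hε
    by_contra hcon
    push_neg at hcon
    have hseq : ∀ n : ℕ, ∃ v : T.domain, (v : H₀) ∈ Kᗮ ∧ ‖(v : H₀)‖ = 1 ∧
        ε * ‖T v‖ + (n : ℝ) * ‖ι (v : H₀)‖ < 1 := by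
      intro n
      obtain ⟨u, hu, hlt⟩ := hcon (n : ℝ) (Nat.cast_nonneg n)
      have hrhs : (0 : ℝ) ≤ ε * ‖T u‖ + (n : ℝ) * ‖ι (u : H₀)‖ := by positivity
      have hupos : (0 : ℝ) < ‖(u : H₀)‖ := lt_of_le_of_lt hrhs hlt
      set c : ℂ := ((‖(u : H₀)‖⁻¹ : ℝ) : ℂ) with hc
      have hcnorm : ‖c‖ = ‖(u : H₀)‖⁻¹ := by
        simp [hc, abs_of_nonneg (inv_nonneg.mpr (norm_nonneg _))]
      refine ⟨c • u, ?_, ?_, ?_⟩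
      · exact Kᗮ.smul_mem c hu
      · show ‖c • (u : H₀)‖ = 1
        rw [norm_smul, hcnorm, inv_mul_cancel₀ hupos.ne']
      · have hTv : T (c • u) = c • T u := T.map_smul c u
        have hιv : ι ((c • u : T.domain) : H₀) = c • ι (u : H₀) := by
          show ι (c • (u : H₀)) = c • ι (u : H₀)
          exact ι.map_smul c _
        rw [hTv, hιv, norm_smul, norm_smul, hcnorm]
        have h1 : ε * (‖(u : H₀)‖⁻¹ * ‖T u‖) + (n : ℝ) * (‖(u : H₀)‖⁻¹ * ‖ι (u : H₀)‖)
            = ‖(u : H₀)‖⁻¹ * (ε * ‖T u‖ + (n : ℝ) * ‖ι (u : H₀)‖) := by ring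
        rw [h1]
        rw [inv_mul_lt_iff₀ hupos, mul_one]
        exact hlt
    choose v hvK hvnorm hvlt using hseq
    obtain ⟨K₀, hK₀c, hK₀⟩ :=
      IsCompactOperator.image_closedBall_subset_compact (𝕜₁ := ℂ)
        (f := (S : H₁ →ₗ[ℂ] H₀)) hcpt ε⁻¹
    have hvmem : ∀ n, ((v n : H₀)) ∈ K₀ := by
      intro n
      have h1 : ε * ‖T (v n)‖ < 1 := by
        nlinarith [hvlt n, mul_nonneg (Nat.cast_nonneg (α := ℝ) n)
          (norm_nonneg (ι (v n : H₀)))]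
      have hTb : ‖T (v n)‖ ≤ ε⁻¹ := by
        rw [← one_div, le_div_iff₀ hε]
        nlinarith
      have : S (T (v n)) ∈ (⇑S) '' Metric.closedBall 0 ε⁻¹ :=
        Set.mem_image_of_mem _ (mem_closedBall_zero_iff.mpr hTb)
      rw [key (v n) (hvK n)] at this
      exact hK₀ this
    obtain ⟨a, _, φ, hφ, hconv⟩ := hK₀c.tendsto_subseq hvmem
    -- the images under ι tend to 0
    have hι0 : Filter.Tendsto (fun n => ι ((v (φ n) : H₀))) Filter.atTop (nhds 0) := by
      apply squeeze_zero_norm' (a := fun n : ℕ => 1 / (n : ℝ)) ?_ tendsto_one_div_atTop_nhds_zero_nat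
      · filter_upwards [Filter.eventually_ge_atTop 1] with n hn
        have hnpos : (0 : ℝ) < (n : ℝ) := by exact_mod_cast hn
        have hφn : (n : ℝ) ≤ (φ n : ℝ) := by exact_mod_cast hφ.le_apply
        have h1 : (φ n : ℝ) * ‖ι ((v (φ n) : H₀))‖ < 1 := by
          nlinarith [hvlt (φ n), mul_nonneg hε.le (norm_nonneg (T (v (φ n))))]
        rw [le_div_iff₀ hnpos]
        nlinarith [norm_nonneg (ι ((v (φ n) : H₀)))]
    have hιa : Filter.Tendsto (fun n => ι ((v (φ n) : H₀))) Filter.atTop (nhds (ι a)) :=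
      (ι.continuous.tendsto a).comp hconv
    have ha0 : a = 0 := by
      have : ι a = 0 := tendsto_nhds_unique hιa hι0
      exact hι_inj (by rw [this, map_zero])
    have hna : Filter.Tendsto (fun n => ‖(v (φ n) : H₀)‖) Filter.atTop (nhds ‖a‖) :=
      (continuous_norm.tendsto a).comp hconv
    have h1 : Filter.Tendsto (fun _ : ℕ => (1 : ℝ)) Filter.atTop (nhds ‖a‖) := by
      simpa [hvnorm] using hna
    have : ‖a‖ = 1 := tendsto_nhds_unique h1 tendsto_const_nhds |>.symm ▸ rfl
    rw [ha0] at this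
    simp at this
  · -- the estimates imply compactness of `S`
    intro hest
    have hiff := isCompactOperator_iff_isCompact_closure_image_closedBall (𝕜₁ := ℂ)
      (f := (S : H₁ →ₗ[ℂ] H₀)) (r := 1) one_pos
    rw [show (⇑(S : H₁ →ₗ[ℂ] H₀)) = (⇑S) from rfl] at hiff
    rw [hiff]
    refine TotallyBounded.isCompact_of_isClosed ?_ isClosed_closure
    apply TotallyBounded.closure
    set A : Set H₀ := (⇑S) '' Metric.closedBall 0 1 with hA
    -- every element of A satisfies the needed properties
    have hAprop : ∀ u ∈ A, ∃ h : u ∈ T.domain, u ∈ Kᗮ ∧ ‖T ⟨u, h⟩‖ ≤ 1 := by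
      rintro u ⟨y, hy, rfl⟩
      obtain ⟨h, hmem, hnorm⟩ := sol y
      exact ⟨h, hmem, hnorm.trans (mem_closedBall_zero_iff.mp hy)⟩
    rw [Metric.totallyBounded_iff]
    intro δ hδ
    obtain ⟨C, hC0, hC⟩ := hest (δ / 8) (by positivity)
    set δ' : ℝ := δ / (2 * (C + 1)) with hδ'
    have hδ'pos : 0 < δ' := by positivity
    -- the image ι '' A is totally bounded
    obtain ⟨Kc, hKcc, hKc⟩ :=
      IsCompactOperator.image_closedBall_subset_compact (𝕜₁ := ℂ)
        (f := ((ι.comp S) : H₁ →ₗ[ℂ] W)) (hι_compact.comp_clm S) 1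
    have hJsub : ι '' A ⊆ Kc := by
      rintro _ ⟨_, ⟨y, hy, rfl⟩, rfl⟩
      exact hKc ⟨y, hy, rfl⟩
    have hJtb : TotallyBounded (ι '' A) := hKcc.totallyBounded.subset hJsub
    obtain ⟨t, hts, htf, htcov⟩ := totallyBounded_iff_subset.mp hJtb
      {p : W × W | dist p.1 p.2 < δ'} (Metric.dist_mem_uniformity hδ'pos)
    -- choose preimages of centers
    have hpre : ∀ w ∈ t, ∃ a ∈ A, ι a = w := by
      intro w hw
      obtain ⟨a, ha, haw⟩ := hts hw
      exact ⟨a, ha, haw⟩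
    choose! g hgA hgι using hpre
    refine ⟨g '' t, htf.image g, ?_⟩
    intro u hu
    obtain ⟨w, hw, hdw⟩ := Set.mem_iUnion₂.mp (htcov (Set.mem_image_of_mem _ hu))
    simp only [Set.mem_setOf_eq] at hdw
    refine Set.mem_iUnion₂.mpr ⟨g w, Set.mem_image_of_mem g hw, ?_⟩
    -- estimate ‖u - g w‖
    obtain ⟨hud, huK, huT⟩ := hAprop u hu
    obtain ⟨had, haK, haT⟩ := hAprop (g w) (hgA w hw)
    set d : T.domain := ⟨u, hud⟩ - ⟨g w, had⟩ with hd
    have hdK : ((d : H₀)) ∈ Kᗮ := Kᗮ.sub_mem huK haK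
    have hest2 := hC d hdK
    have hdco : ((d : H₀)) = u - g w := rfl
    have hTd : ‖T d‖ ≤ 2 := by
      have := T.map_sub (⟨u, hud⟩ : T.domain) ⟨g w, had⟩
      rw [hd, this]
      calc ‖T ⟨u, hud⟩ - T ⟨g w, had⟩‖ ≤ ‖T ⟨u, hud⟩‖ + ‖T ⟨g w, had⟩‖ := norm_sub_le _ _
        _ ≤ 2 := by linarith
    have hιd : ‖ι ((d : H₀))‖ ≤ δ' := by
      rw [hdco, map_sub]
      have : dist (ι u) (ι (g w)) < δ' := by rw [hgι w hw]; exact hdw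
      rw [dist_eq_norm] at this
      exact this.le
    have hfin : ‖u - g w‖ < δ := by
      rw [hdco] at hest2
      have h1 : C * ‖ι ((d : H₀))‖ ≤ C * δ' := by
        apply mul_le_mul_of_nonneg_left hιd hC0
      have h2 : C * δ' ≤ δ / 2 := by
        rw [hδ', ← mul_div_assoc, div_le_div_iff₀ (by positivity) (by norm_num : (0:ℝ) < 2)]
        nlinarith
      have h3 : δ / 8 * ‖T d‖ ≤ δ / 8 * 2 := by
        apply mul_le_mul_of_nonneg_left hTd (by positivity)
      have := hest2
      rw [hdco] at hιd
      nlinarith [hιd]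
    rw [Metric.mem_ball, dist_eq_norm]
    exact hfin
end
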